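/- For every k ≥ 1, every k-tuple of nonzero reals (α₁,…,α_k), and every n divisible by k+1, there exists a set E of n points in ℝ³ such that the number of k-chains of type (α₁,…,α_k) in E (tuples (R₁,…,R_{k+1}) ∈ E^{k+1} with R_j·R_{j+1} = α_j for all j) is at least (n/(k+1))^{k+1}. -/

import Mathlib

/-- The standard dot product on ℝ³. -/
def dot3 (A B : ℝ × ℝ × ℝ) : ℝ := A.1 * B.1 + A.2.1 * B.2.1 + A.2.2 * B.2.2

namespace ManyChainsAux

noncomputable def cseq (β : ℕ → ℝ) : ℕ → ℝ
  | 0 => 1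
  | j + 1 => β j / cseq β j

noncomputable def pt (β : ℕ → ℝ) (j : ℕ) (t : ℝ) : ℝ × ℝ × ℝ :=
  (cseq β j, if Even j then 0 else t, if Even j then t else 0)

lemma cseq_ne_zero (β : ℕ → ℝ) (hβ : ∀ j, β j ≠ 0) (j : ℕ) : cseq β j ≠ 0 := by
  induction j with
  | zero => norm_num [cseq]
  | succ j ih =>
    simp only [cseq]
    exact div_ne_zero (hβ j) ih

lemma dot_pt (β : ℕ → ℝ) (hβ : ∀ j, β j ≠ 0) (j : ℕ) (t t' : ℝ) :
    dot3 (pt β j t) (pt β (j + 1) t') = β j := by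
  have h := cseq_ne_zero β hβ j
  by_cases hj : Even j
  · have h2 : ¬ Even (j + 1) := by simp [Nat.even_add_one, hj]
    simp only [dot3, pt, cseq, if_pos hj, if_neg h2]
    field_simp
    ring
  · have h2 : Even (j + 1) := by simp [Nat.even_add_one, hj]
    simp only [dot3, pt, cseq, if_neg hj, if_pos h2]
    field_simp
    ring

lemma pt_inj (β : ℕ → ℝ) {j j' : ℕ} {t t' : ℝ} (ht : 0 < t) (ht' : 0 < t')
    (h : pt β j t = pt β j' t') : t = t' ∧ (Even j ↔ Even j') := by
  have h2 : (if Even j then (0:ℝ) else t) = if Even j' then 0 else t' := congrArg (·.2.1) h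
  have h3 : (if Even j then t else 0) = if Even j' then t' else 0 := congrArg (·.2.2) h
  by_cases hj : Even j <;> by_cases hj' : Even j'
  · simp only [if_pos hj, if_pos hj'] at h3
    exact ⟨h3, by tauto⟩
  · simp only [if_pos hj, if_neg hj'] at h3
    exact absurd h3 ht.ne'
  · simp only [if_neg hj, if_pos hj'] at h2
    exact absurd h2 ht.ne'
  · simp only [if_neg hj, if_neg hj'] at h2
    exact ⟨h2, by tauto⟩

end ManyChainsAux

open ManyChainsAux in
theorem many_chains_construction_3d (k : ℕ) (hk : 1 ≤ k) (α : Fin k → ℝ)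
    (hα : ∀ j, α j ≠ 0) (n : ℕ) (hdvd : (k + 1) ∣ n) :
    ∃ E : Finset (ℝ × ℝ × ℝ), E.card = n ∧
      (n / (k + 1)) ^ (k + 1) ≤
        {R : Fin (k + 1) → ℝ × ℝ × ℝ | (∀ i, R i ∈ E) ∧
          ∀ j : Fin k, dot3 (R j.castSucc) (R j.succ) = α j}.ncard := by
  obtain ⟨m, rfl⟩ := hdvd
  have hm : (k + 1) * m / (k + 1) = m := Nat.mul_div_cancel_left m (by omega)
  set β : ℕ → ℝ := fun j => if h : j < k then α ⟨j, h⟩ else 1 with hβdef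
  have hβ : ∀ j, β j ≠ 0 := by
    intro j
    by_cases h : j < k <;> simp [hβdef, h]
    exact hα _
  -- the value of the free coordinate
  set g : Fin (k + 1) × Fin m → ℝ := fun p => (p.1 : ℕ) * m + (p.2 : ℕ) + 1 with hgdef
  have hgpos : ∀ p, 0 < g p := by
    intro p
    have : (0:ℝ) ≤ ((p.1 : ℕ) * m + (p.2 : ℕ) : ℕ) := Nat.cast_nonneg _
    simp only [hgdef]
    push_cast
    positivity
  set f : Fin (k + 1) × Fin m → ℝ × ℝ × ℝ := fun p => pt β p.1 (g p) with hfdef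
  have hf : Function.Injective f := by
    intro p q hpq
    have := pt_inj β (hgpos p) (hgpos q) hpq
    have hnat : (p.1 : ℕ) * m + (p.2 : ℕ) + 1 = (q.1 : ℕ) * m + (q.2 : ℕ) + 1 := by
      have h1 := this.1
      simp only [hgdef] at h1
      exact_mod_cast h1
    have hp2 := p.2.isLt
    have hq2 := q.2.isLt
    have h1 : (p.1 : ℕ) = (q.1 : ℕ) := by
      rcases Nat.lt_trichotomy (p.1 : ℕ) (q.1 : ℕ) with h | h | h
      · nlinarith [Nat.succ_le_of_lt h]
      · exact h
      · nlinarith [Nat.succ_le_of_lt h]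
    have h2 : (p.2 : ℕ) = (q.2 : ℕ) := by rw [h1] at hnat; omega
    exact Prod.ext (Fin.ext h1) (Fin.ext h2)
  refine ⟨Finset.image f Finset.univ, ?_, ?_⟩
  · rw [Finset.card_image_of_injective _ hf, Finset.card_univ, Fintype.card_prod,
      Fintype.card_fin, Fintype.card_fin]
  · rw [hm]
    set S : Set (Fin (k + 1) → ℝ × ℝ × ℝ) :=
      {R | (∀ i, R i ∈ Finset.image f Finset.univ) ∧
        ∀ j : Fin k, dot3 (R j.castSucc) (R j.succ) = α j} with hSdef
    set F : (Fin (k + 1) → Fin m) → (Fin (k + 1) → ℝ × ℝ × ℝ) :=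
      fun σ j => f (j, σ j) with hFdef
    have hF : Function.Injective F := by
      intro σ σ' h
      funext j
      have := congrFun h j
      simpa using congrArg Prod.snd (hf this)
    have hmem : ∀ σ, F σ ∈ S := by
      intro σ
      constructor
      · intro i
        exact Finset.mem_image_of_mem f (Finset.mem_univ _)
      · intro j
        have hcast : ((j.castSucc : Fin (k+1)) : ℕ) = (j : ℕ) := rfl
        have hsucc : ((j.succ : Fin (k+1)) : ℕ) = (j : ℕ) + 1 := rfl
        show dot3 (f (j.castSucc, σ j.castSucc)) (f (j.succ, σ j.succ)) = α j
        simp only [hfdef, hcast, hsucc]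
        rw [dot_pt β hβ]
        simp [hβdef, j.isLt]
    have hSfin : S.Finite := by
      apply Set.Finite.subset (Set.Finite.pi (fun _ : Fin (k+1) =>
        (Finset.image f Finset.univ).finite_toSet))
      intro R hR
      simp only [Set.mem_pi, Set.mem_univ, forall_true_left]
      intro i
      exact hR.1 i
    calc m ^ (k + 1) = (Set.univ : Set (Fin (k + 1) → Fin m)).ncard := by
          rw [Set.ncard_univ, Nat.card_eq_fintype_card, Fintype.card_fun,
            Fintype.card_fin, Fintype.card_fin]
      _ = (F '' Set.univ).ncard := (Set.ncard_image_of_injective _ hF).symm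
      _ ≤ S.ncard := by
          apply Set.ncard_le_ncard _ hSfin
          rintro _ ⟨σ, -, rfl⟩
          exact hmem σ
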